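/- Let I ⊆ ℝ be an interval and K : I → ℝ a Borel measurable function that is either nondecreasing or continuous. Let S be a real-valued random variable on a probability space (Ω, 𝓕, ℙ) whose topological support 𝒮 (the support of the pushforward measure of ℙ under S) satisfies 𝒮 ⊆ K(I) := {K(θ) : θ ∈ I}. Then there exists a Borel measurable function g : 𝒮 → I such that K(g(s)) = s for every s ∈ 𝒮; consequently, Θ := g ∘ S is a random variable taking values in I with K(Θ) = S ℙ-almost surely. -/

import Mathlib

open MeasureTheory

/-- The topological support of a Borel measure on ℝ: the set of points all of whose
neighbourhoods have positive measure (the smallest closed set of full measure). -/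
def msupport (μ : MeasureTheory.Measure ℝ) : Set ℝ := {x : ℝ | ∀ U ∈ nhds x, μ U ≠ 0}

open Set Real

lemma msupport_isClosed (μ : Measure ℝ) : IsClosed (msupport μ) := by
  rw [← isOpen_compl_iff, isOpen_iff_mem_nhds]
  intro x hx
  simp only [msupport, mem_compl_iff, mem_setOf_eq, not_forall] at hx
  obtain ⟨U, hU, hU0⟩ := hx
  simp only [not_ne_iff] at hU0
  obtain ⟨t, htU, hto, hxt⟩ := mem_nhds_iff.1 hU
  refine Filter.mem_of_superset (hto.mem_nhds hxt) ?_
  intro y hy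
  simp only [msupport, mem_compl_iff, mem_setOf_eq, not_forall]
  exact ⟨U, Filter.mem_of_superset (hto.mem_nhds hy) htU, by simp [hU0]⟩

lemma msupport_compl_null (μ : Measure ℝ) : μ (msupport μ)ᶜ = 0 := by
  classical
  set B := {U ∈ TopologicalSpace.countableBasis ℝ | μ U = 0} with hB
  have hBc : B.Countable := (TopologicalSpace.countable_countableBasis ℝ).mono (sep_subset _ _)
  have hsub : (msupport μ)ᶜ ⊆ ⋃ U ∈ B, U := by
    intro x hx
    simp only [msupport, mem_compl_iff, mem_setOf_eq, not_forall] at hx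
    obtain ⟨U, hU, hU0⟩ := hx
    simp only [not_ne_iff] at hU0
    obtain ⟨V, hVB, hxV, hVU⟩ :=
      (TopologicalSpace.isBasis_countableBasis ℝ).mem_nhds_iff.1 hU
    have hV0 : μ V = 0 := measure_mono_null hVU hU0
    exact mem_biUnion ⟨hVB, hV0⟩ hxV
  refine measure_mono_null hsub ?_
  rw [measure_biUnion_null_iff hBc]
  exact fun U hU => hU.2

/-- A lower set in ℝ is measurable. -/
lemma IsLowerSet.measurableSet' {L : Set ℝ} (h : IsLowerSet L) : MeasurableSet L := by
  rcases L.eq_empty_or_nonempty with rfl | hne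
  · exact MeasurableSet.empty
  by_cases hbdd : BddAbove L
  · have h1 : Iio (sSup L) ⊆ L := fun x hx => by
      obtain ⟨y, hyL, hxy⟩ := exists_lt_of_lt_csSup hne hx
      exact h hxy.le hyL
    have h2 : L ⊆ Iic (sSup L) := fun x hx => le_csSup hbdd hx
    by_cases hmem : sSup L ∈ L
    · have : L = Iic (sSup L) := subset_antisymm h2 (fun x hx => h hx hmem)
      rw [this]; exact measurableSet_Iic
    · have : L = Iio (sSup L) := by
        refine subset_antisymm (fun x hx => ?_) h1
        have hxle : x ≤ sSup L := h2 hx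
        exact mem_Iio.2 (lt_of_le_of_ne hxle (fun hx' => hmem (hx' ▸ hx)))
      rw [this]; exact measurableSet_Iio
  · have : L = univ := by
      refine eq_univ_of_forall fun x => ?_
      obtain ⟨y, hyL, hxy⟩ := not_bddAbove_iff.1 hbdd x
      exact h hxy.le hyL
    rw [this]; exact MeasurableSet.univ

/-- The midpoint-style monotone selection: a right inverse of a monotone `K` on its image. -/
noncomputable def monoSel (I : Set ℝ) (K : ℝ → ℝ) (s : ℝ) : ℝ :=
  Real.tan ((sInf (Real.arctan '' {θ ∈ I | K θ = s}) +
    sSup (Real.arctan '' {θ ∈ I | K θ = s})) / 2)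

lemma monoSel_mem {I : Set ℝ} (hI : I.OrdConnected) {K : ℝ → ℝ} (hK : MonotoneOn K I)
    {s : ℝ} (hs : ∃ θ ∈ I, K θ = s) : monoSel I K s ∈ I ∧ K (monoSel I K s) = s := by
  set J := {θ ∈ I | K θ = s} with hJ
  set A := Real.arctan '' J with hA
  have hJne : J.Nonempty := by obtain ⟨θ, hθ, hKθ⟩ := hs; exact ⟨θ, hθ, hKθ⟩
  have hAne : A.Nonempty := hJne.image _
  have hAsub : A ⊆ Ioo (-(π / 2)) (π / 2) := by
    rintro a ⟨θ, _, rfl⟩; exact Real.arctan_mem_Ioo θ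
  have hAbdd : BddAbove A := (bddAbove_Ioo (a := -(π/2)) (b := π/2)).mono hAsub
  have hAbdd' : BddBelow A := (bddBelow_Ioo (a := π/2) (b := -(π/2))).mono hAsub
  set m := (sInf A + sSup A) / 2 with hm
  have key : ∃ θ ∈ J, Real.arctan θ = m := by
    rcases eq_or_lt_of_le (csInf_le_csSup hAne hAbdd' hAbdd) with heq | hlt
    · obtain ⟨a, haA⟩ := hAne
      have ha1 : sInf A ≤ a := csInf_le hAbdd' haA
      have ha2 : a ≤ sSup A := le_csSup hAbdd haA
      have ham : a = m := by rw [hm, ← heq]; linarith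
      obtain ⟨θ, hθJ, hθa⟩ := haA
      exact ⟨θ, hθJ, by rw [hθa, ham]⟩
    · have him : sInf A < m := by rw [hm]; linarith
      have hmj : m < sSup A := by rw [hm]; linarith
      obtain ⟨a, haA, ham⟩ := exists_lt_of_csInf_lt hAne him
      obtain ⟨b, hbA, hmb⟩ := exists_lt_of_lt_csSup hAne hmj
      have hmIoo : m ∈ Ioo (-(π / 2)) (π / 2) :=
        ⟨lt_trans (hAsub haA).1 ham, lt_trans hmb (hAsub hbA).2⟩
      obtain ⟨α, hαJ, hαa⟩ := haA
      obtain ⟨β, hβJ, hβb⟩ := hbA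
      set θm := Real.tan m with hθm
      have harctan : Real.arctan θm = m := Real.arctan_tan hmIoo.1 hmIoo.2
      have hαθ : α ≤ θm := by
        by_contra hcon
        push_neg at hcon
        have := Real.arctan_strictMono hcon
        rw [harctan, hαa] at this
        linarith
      have hθβ : θm ≤ β := by
        by_contra hcon
        push_neg at hcon
        have := Real.arctan_strictMono hcon
        rw [harctan, hβb] at this
        linarith
      have hθI : θm ∈ I := hI.out hαJ.1 hβJ.1 ⟨hαθ, hθβ⟩
      have hKθ : K θm = s := by
        have h1 : K α ≤ K θm := hK hαJ.1 hθI hαθ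
        have h2 : K θm ≤ K β := hK hθI hβJ.1 hθβ
        rw [hαJ.2] at h1; rw [hβJ.2] at h2
        linarith
      exact ⟨θm, ⟨hθI, hKθ⟩, harctan⟩
  obtain ⟨θ, hθJ, hθm⟩ := key
  have : monoSel I K s = θ := by
    show Real.tan ((sInf A + sSup A) / 2) = θ
    rw [← hm, ← hθm, Real.tan_arctan]
  rw [this]
  exact ⟨hθJ.1, hθJ.2⟩

lemma monoSel_mono {I : Set ℝ} (hI : I.OrdConnected) {K : ℝ → ℝ} (hK : MonotoneOn K I)
    {s s' : ℝ} (hs : ∃ θ ∈ I, K θ = s) (hs' : ∃ θ ∈ I, K θ = s') (hss : s ≤ s') :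
    monoSel I K s ≤ monoSel I K s' := by
  rcases eq_or_lt_of_le hss with rfl | hlt
  · exact le_refl _
  obtain ⟨hmem, heq⟩ := monoSel_mem hI hK hs
  obtain ⟨hmem', heq'⟩ := monoSel_mem hI hK hs'
  by_contra hcon
  push_neg at hcon
  have := hK hmem' hmem hcon.le
  rw [heq, heq'] at this
  linarith

/-- Measurable right inverse for the monotone case. -/
lemma mono_case {I : Set ℝ} (hI : I.OrdConnected) {K : ℝ → ℝ} (hK : MonotoneOn K I)
    {𝒮 : Set ℝ} (h𝒮m : MeasurableSet 𝒮) (h𝒮 : 𝒮 ⊆ K '' I) {θ0 : ℝ} (hθ0 : θ0 ∈ I) :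
    ∃ g : ℝ → ℝ, Measurable g ∧ (∀ s ∈ 𝒮, g s ∈ I ∧ K (g s) = s) ∧ (∀ s, g s ∈ I) := by
  classical
  have hsol : ∀ s ∈ 𝒮, ∃ θ ∈ I, K θ = s := by
    intro s hs; obtain ⟨θ, hθ, hKθ⟩ := h𝒮 hs; exact ⟨θ, hθ, hKθ⟩
  refine ⟨fun s => if s ∈ 𝒮 then monoSel I K s else θ0, ?_, ?_, ?_⟩
  · apply measurable_of_Iic
    intro c
    have hset : (fun s => if s ∈ 𝒮 then monoSel I K s else θ0) ⁻¹' Iic c =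
        (𝒮 ∩ {x | ∃ s ∈ 𝒮, monoSel I K s ≤ c ∧ x ≤ s}) ∪ (𝒮ᶜ ∩ {x : ℝ | θ0 ≤ c}) := by
      ext x
      simp only [mem_preimage, mem_Iic, mem_union, mem_inter_iff, mem_compl_iff, mem_setOf_eq]
      by_cases hx : x ∈ 𝒮
      · simp only [hx, if_true, true_and, not_true, false_and, or_false]
        constructor
        · intro h; exact ⟨x, hx, h, le_refl x⟩
        · rintro ⟨s, hsS, hsel, hxs⟩
          exact le_trans (monoSel_mono hI hK (hsol x hx) (hsol s hsS) hxs) hsel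
      · simp [hx]
    rw [hset]
    have hlower : IsLowerSet {x : ℝ | ∃ s ∈ 𝒮, monoSel I K s ≤ c ∧ x ≤ s} := by
      intro a b hba ⟨s, hsS, hsel, has⟩
      exact ⟨s, hsS, hsel, le_trans hba has⟩
    refine MeasurableSet.union (h𝒮m.inter hlower.measurableSet') (h𝒮m.compl.inter ?_)
    by_cases hc : θ0 ≤ c
    · have h : {x : ℝ | θ0 ≤ c} = univ := eq_univ_of_forall fun _ => hc
      rw [h]; exact MeasurableSet.univ
    · have h : {x : ℝ | θ0 ≤ c} = ∅ := eq_empty_iff_forall_notMem.2 fun _ hx => hc hx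
      rw [h]; exact MeasurableSet.empty
  · intro s hs
    simp only [if_pos hs]
    exact monoSel_mem hI hK (hsol s hs)
  · intro s
    by_cases hs : s ∈ 𝒮
    · simp only [if_pos hs]; exact (monoSel_mem hI hK (hsol s hs)).1
    · simp only [if_neg hs]; exact hθ0

/-- Measurable right inverse for the continuous case. -/
lemma cont_case {I : Set ℝ} (hI : I.OrdConnected) {K : ℝ → ℝ} (hKc : ContinuousOn K I)
    {𝒮 : Set ℝ} (h𝒮 : 𝒮 ⊆ K '' I) {θ0 : ℝ} (hθ0 : θ0 ∈ I) :
    ∃ g : ℝ → ℝ, Measurable g ∧ (∀ s ∈ 𝒮, g s ∈ I ∧ K (g s) = s) ∧ (∀ s, g s ∈ I) := by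
  classical
  -- countable dense subset of I
  haveI : TopologicalSpace.SeparableSpace ↥I := TopologicalSpace.SecondCountableTopology.to_separableSpace
  obtain ⟨D₀, hD₀c, hD₀d⟩ := TopologicalSpace.exists_countable_dense ↥I
  set D : Set ℝ := Subtype.val '' D₀ with hD
  have hDc : D.Countable := hD₀c.image _
  have hDI : D ⊆ I := by rintro d ⟨⟨d', hd'⟩, _, rfl⟩; exact hd'
  have hDdense : ∀ x ∈ I, ∀ ε > 0, ∃ d ∈ D, |x - d| < ε := by
    intro x hx ε hε
    have hxc : (⟨x, hx⟩ : ↥I) ∈ closure D₀ := hD₀d _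
    obtain ⟨d, hdD₀, hdist⟩ := Metric.mem_closure_iff.1 hxc ε hε
    exact ⟨d.val, ⟨d, hdD₀, rfl⟩, hdist⟩
  -- the countable index set
  set Q : Set ℝ := D ∪ ({x | IsLeast I x} ∪ {x | IsGreatest I x}) with hQ
  have hQc : Q.Countable := by
    refine hDc.union (Set.Countable.union ?_ ?_)
    · exact Set.Subsingleton.countable (fun a ha b hb => ha.unique hb)
    · exact Set.Subsingleton.countable (fun a ha b hb => ha.unique hb)
  have hQI : Q ⊆ I := by
    rintro x (hx | hx | hx)
    · exact hDI hx
    · exact hx.1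
    · exact hx.1
  have hQle : ∀ x ∈ I, ∃ d ∈ Q, d ≤ x := by
    intro x hx
    by_cases hleast : IsLeast I x
    · exact ⟨x, Or.inr (Or.inl hleast), le_refl x⟩
    · have : ∃ y ∈ I, y < x := by
        by_contra hcon
        push_neg at hcon
        exact hleast ⟨hx, fun y hy => (hcon y hy)⟩
      obtain ⟨y, hyI, hyx⟩ := this
      obtain ⟨d, hdD, hdist⟩ := hDdense y hyI (x - y) (by linarith)
      refine ⟨d, Or.inl hdD, ?_⟩
      have : d - y ≤ |y - d| := by rw [abs_sub_comm]; exact le_abs_self _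
      linarith
  have hQge : ∀ x ∈ I, ∃ d ∈ Q, x ≤ d := by
    intro x hx
    by_cases hgreat : IsGreatest I x
    · exact ⟨x, Or.inr (Or.inr hgreat), le_refl x⟩
    · have : ∃ y ∈ I, x < y := by
        by_contra hcon
        push_neg at hcon
        exact hgreat ⟨hx, fun y hy => (hcon y hy)⟩
      obtain ⟨y, hyI, hxy⟩ := this
      obtain ⟨d, hdD, hdist⟩ := hDdense y hyI (y - x) (by linarith)
      refine ⟨d, Or.inl hdD, ?_⟩
      have : y - d ≤ |y - d| := le_abs_self _
      linarith
  -- enumerate Q × Q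
  have hQne : Q.Nonempty := by
    obtain ⟨d, hd, _⟩ := hQle θ0 hθ0
    exact ⟨d, hd⟩
  have hQQc : (Q ×ˢ Q : Set (ℝ × ℝ)).Countable := hQc.prod hQc
  have hQQne : (Q ×ˢ Q : Set (ℝ × ℝ)).Nonempty := hQne.prod hQne
  obtain ⟨f, hf⟩ := hQQc.exists_eq_range hQQne
  -- the compact pieces
  set C : ℕ → Set ℝ := fun n => Icc (f n).1 (f n).2 with hC
  have hCI : ∀ n, C n ⊆ I := by
    intro n
    have hfn : f n ∈ Q ×ˢ Q := hf ▸ mem_range_self n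
    intro x hx
    exact hI.out (hQI hfn.1) (hQI hfn.2) hx
  have hCcomp : ∀ n, IsCompact (C n) := fun n => isCompact_Icc
  set E : ℕ → Set ℝ := fun n => K '' C n with hE
  have hEcomp : ∀ n, IsCompact (E n) := fun n =>
    (hCcomp n).image_of_continuousOn (hKc.mono (hCI n))
  have hEmeas : ∀ n, MeasurableSet (E n) := fun n => (hEcomp n).measurableSet
  -- the pieces cover 𝒮
  have hcover : ∀ s ∈ 𝒮, ∃ n, s ∈ E n := by
    intro s hs
    obtain ⟨θ, hθI, hKθ⟩ := h𝒮 hs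
    obtain ⟨d, hdQ, hdθ⟩ := hQle θ hθI
    obtain ⟨d', hd'Q, hθd'⟩ := hQge θ hθI
    have : ((d, d') : ℝ × ℝ) ∈ Q ×ˢ Q := ⟨hdQ, hd'Q⟩
    rw [hf] at this
    obtain ⟨n, hn⟩ := this
    refine ⟨n, θ, ?_, hKθ⟩
    show θ ∈ Icc (f n).1 (f n).2
    rw [hn]
    exact ⟨hdθ, hθd'⟩
  -- solution sets within pieces
  set t : ℕ → ℝ → Set ℝ := fun n s => {θ ∈ C n | K θ = s} with ht
  have htcomp : ∀ n s, IsCompact (t n s) := by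
    intro n s
    have hclosed : IsClosed (C n ∩ K ⁻¹' {s}) :=
      (hKc.mono (hCI n)).preimage_isClosed_of_isClosed isClosed_Icc isClosed_singleton
    refine (hCcomp n).of_isClosed_subset ?_ ?_
    · have ht' : t n s = C n ∩ K ⁻¹' {s} := by
        ext θ
        simp only [ht, mem_setOf_eq, mem_inter_iff, mem_preimage, mem_singleton_iff]
      rw [ht']
      exact hclosed
    · intro θ hθ; exact hθ.1
  have htne : ∀ n s, s ∈ E n → (t n s).Nonempty := by
    rintro n s ⟨θ, hθC, hKθ⟩
    exact ⟨θ, hθC, hKθ⟩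
  set gS : ℕ → ℝ → ℝ := fun n s => sInf (t n s) with hgS
  have hgSmem : ∀ n s, s ∈ E n → gS n s ∈ t n s := fun n s hs =>
    (htcomp n s).sInf_mem (htne n s hs)
  -- the piece-wise preimage identity
  have hkey : ∀ n c, {s ∈ E n | gS n s ≤ c} = K '' (C n ∩ Iic c) := by
    intro n c
    ext s
    simp only [mem_setOf_eq, mem_image, mem_inter_iff, mem_Iic]
    constructor
    · rintro ⟨hsE, hle⟩
      obtain ⟨hθC, hKθ⟩ := hgSmem n s hsE
      exact ⟨gS n s, ⟨hθC, hle⟩, hKθ⟩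
    · rintro ⟨θ, ⟨hθC, hθc⟩, hKθ⟩
      have hsE : s ∈ E n := ⟨θ, hθC, hKθ⟩
      refine ⟨hsE, ?_⟩
      have hbdd : BddBelow (t n s) := (htcomp n s).bddBelow
      exact le_trans (csInf_le hbdd ⟨hθC, hKθ⟩) hθc
  have hkeymeas : ∀ n c, MeasurableSet (K '' (C n ∩ Iic c)) := by
    intro n c
    have hcomp : IsCompact (C n ∩ Iic c) :=
      (hCcomp n).of_isClosed_subset (isClosed_Icc.inter isClosed_Iic) inter_subset_left
    exact (hcomp.image_of_continuousOn
      (hKc.mono (fun x hx => hCI n hx.1))).measurableSet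
  -- the global function
  set g : ℝ → ℝ := fun s => if h : ∃ n, s ∈ E n then gS (Nat.find h) s else θ0 with hg
  have hgval : ∀ s (h : ∃ n, s ∈ E n), g s ∈ t (Nat.find h) s := by
    intro s h
    rw [hg]
    simp only [dif_pos h]
    exact hgSmem _ s (Nat.find_spec h)
  refine ⟨g, ?_, ?_, ?_⟩
  · apply measurable_of_Iic
    intro c
    set A : ℕ → Set ℝ := fun n => E n \ ⋃ m ∈ Finset.range n, E m with hA
    have hAmeas : ∀ n, MeasurableSet (A n) := fun n =>
      (hEmeas n).diff (MeasurableSet.biUnion (Finset.range n).countable_toSet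
        (fun m _ => hEmeas m))
    have hset : g ⁻¹' Iic c =
        (⋃ n, A n ∩ K '' (C n ∩ Iic c)) ∪ ((⋃ n, E n)ᶜ ∩ {x : ℝ | θ0 ≤ c}) := by
      ext s
      simp only [mem_preimage, mem_Iic, mem_union, mem_iUnion, mem_inter_iff, mem_compl_iff,
        mem_setOf_eq, not_exists]
      by_cases hex : ∃ n, s ∈ E n
      · set n₀ := Nat.find hex with hn₀
        have hgs : g s = gS n₀ s := by rw [hg]; simp only [dif_pos hex]; rfl
        have hsA : s ∈ A n₀ := by
          rw [hA]
          simp only [mem_diff, mem_iUnion, Finset.mem_range, not_exists]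
          exact ⟨Nat.find_spec hex, fun m hm hmem => Nat.find_min hex hm hmem⟩
        have hAunique : ∀ n, s ∈ A n → n = n₀ := by
          intro n hn
          rw [hA] at hn
          simp only [mem_diff, mem_iUnion, Finset.mem_range, not_exists] at hn
          have h1 : n₀ ≤ n := Nat.find_le hn.1
          rcases eq_or_lt_of_le h1 with heq | hlt
          · exact heq.symm
          · exact absurd (Nat.find_spec hex) (hn.2 n₀ hlt)
        constructor
        · intro hle
          refine Or.inl ⟨n₀, hsA, ?_⟩
          have := (hkey n₀ c).subset ⟨Nat.find_spec hex, by rw [← hgs]; exact hle⟩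
          exact this
        · rintro (⟨n, hnA, hnim⟩ | ⟨hcon, _⟩)
          · have hn : n = n₀ := hAunique n hnA
            rw [hn] at hnim
            have := (hkey n₀ c).symm.subset hnim
            rw [hgs]
            exact this.2
          · exact absurd hex (by simpa using hcon)
      · have hgs : g s = θ0 := by rw [hg]; simp only [dif_neg hex]
        rw [hgs]
        push_neg at hex
        constructor
        · intro hle
          exact Or.inr ⟨hex, hle⟩
        · rintro (⟨n, hnA, _⟩ | ⟨_, hle⟩)
          · rw [hA] at hnA
            exact absurd hnA.1 (hex n)
          · exact hle
    rw [hset]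
    refine MeasurableSet.union
      (MeasurableSet.iUnion fun n => (hAmeas n).inter (hkeymeas n c)) ?_
    refine MeasurableSet.inter (MeasurableSet.iUnion hEmeas).compl ?_
    by_cases hc : θ0 ≤ c
    · have h : {x : ℝ | θ0 ≤ c} = univ := eq_univ_of_forall fun _ => hc
      rw [h]; exact MeasurableSet.univ
    · have h : {x : ℝ | θ0 ≤ c} = ∅ := eq_empty_iff_forall_notMem.2 fun _ hx => hc hx
      rw [h]; exact MeasurableSet.empty
  · intro s hs
    have hex := hcover s hs
    have := hgval s hex
    exact ⟨hCI _ this.1, this.2⟩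
  · intro s
    by_cases hex : ∃ n, s ∈ E n
    · have := hgval s hex
      exact hCI _ this.1
    · rw [hg]
      simp only [dif_neg hex]
      exact hθ0

/-- If `K` is a Borel measurable function on an interval `I` that is
nondecreasing or continuous on `I`, and the topological support `𝒮` of the distribution of `S`
satisfies `𝒮 ⊆ K '' I`, then `K` admits a measurable right-inverse `g` on `𝒮` taking values
in `I`; consequently `Θ := g ∘ S` takes values in `I` and `K (Θ ω) = S ω` ℙ-a.s. -/
theorem stmt1 {Ω : Type*} [MeasurableSpace Ω] (ℙ : Measure Ω) [IsProbabilityMeasure ℙ]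
    (I : Set ℝ) (hI : I.OrdConnected)
    (K : ℝ → ℝ) (hKmeas : Measurable K)
    (hK : MonotoneOn K I ∨ ContinuousOn K I)
    (S : Ω → ℝ) (hS : Measurable S)
    (hsupp : msupport (ℙ.map S) ⊆ K '' I) :
    ∃ g : ℝ → ℝ, Measurable g ∧
      (∀ s ∈ msupport (ℙ.map S), g s ∈ I ∧ K (g s) = s) ∧
      (∀ s : ℝ, g s ∈ I) ∧
      (∀ᵐ ω ∂ℙ, K (g (S ω)) = S ω) := by
  set μ := ℙ.map S with hμ
  haveI : IsProbabilityMeasure μ := Measure.isProbabilityMeasure_map hS.aemeasurable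
  set 𝒮 := msupport μ with h𝒮
  have h𝒮closed : IsClosed 𝒮 := msupport_isClosed μ
  have h𝒮meas : MeasurableSet 𝒮 := h𝒮closed.measurableSet
  have hnull : μ 𝒮ᶜ = 0 := msupport_compl_null μ
  have h𝒮ne : 𝒮.Nonempty := by
    by_contra hcon
    rw [Set.not_nonempty_iff_eq_empty] at hcon
    have : μ Set.univ = 0 := by
      rw [← Set.compl_empty, ← hcon]
      exact hnull
    simp [measure_univ] at this
  obtain ⟨s₀, hs₀⟩ := h𝒮ne
  obtain ⟨θ0, hθ0, _⟩ := hsupp hs₀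
  have hmain : ∃ g : ℝ → ℝ, Measurable g ∧ (∀ s ∈ 𝒮, g s ∈ I ∧ K (g s) = s) ∧
      (∀ s, g s ∈ I) := by
    rcases hK with hKmono | hKcont
    · exact mono_case hI hKmono h𝒮meas hsupp hθ0
    · exact cont_case hI hKcont hsupp hθ0
  obtain ⟨g, hgmeas, hginv, hgI⟩ := hmain
  refine ⟨g, hgmeas, hginv, hgI, ?_⟩
  have hae : ∀ᵐ ω ∂ℙ, S ω ∈ 𝒮 := by
    rw [ae_iff]
    have : {ω | ¬ S ω ∈ 𝒮} = S ⁻¹' 𝒮ᶜ := rfl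
    rw [this, ← Measure.map_apply hS h𝒮meas.compl]
    exact hnull
  filter_upwards [hae] with ω hω
  exact (hginv _ hω).2
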